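/- Let P ≥ 0 be a real number and let θ, ξ ∈ [0, π/2] be angles with θ + ξ ≤ π/2. Then ln(1 + P·cos²(θ + ξ)) ≥ ln(1 + P·cos²(ξ)) − sin(θ)·K(P), where K(x) := πx/(2√(x + 1)). -/

import Mathlib

open Real

/-- K(x) := πx / (2√(x+1)). -/
noncomputable def Kfun (x : ℝ) : ℝ := Real.pi * x / (2 * Real.sqrt (x + 1))

lemma deriv_aux (P : ℝ) (t : ℝ) (hP : 0 ≤ P) :
    HasDerivAt (fun t => Real.log (1 + P * Real.cos t ^ 2))
      (P * (2 * Real.cos t ^ 1 * (-Real.sin t)) / (1 + P * Real.cos t ^ 2)) t := by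
  have hpos : 0 < 1 + P * Real.cos t ^ 2 := by positivity
  have h1 : HasDerivAt (fun t => 1 + P * Real.cos t ^ 2)
      (P * (2 * Real.cos t ^ 1 * (-Real.sin t))) t := by
    exact (((Real.hasDerivAt_cos t).pow 2).const_mul P).const_add 1
  exact h1.log (ne_of_gt hpos)

lemma bound_aux (P : ℝ) (hP : 0 ≤ P) (t : ℝ) :
    ‖P * (2 * Real.cos t ^ 1 * (-Real.sin t)) / (1 + P * Real.cos t ^ 2)‖
      ≤ P / Real.sqrt (P + 1) := by
  have hr : Real.sqrt (P + 1) ^ 2 = P + 1 := Real.sq_sqrt (by linarith)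
  have hr1 : 1 ≤ Real.sqrt (P + 1) := by
    nlinarith [Real.sqrt_nonneg (P + 1)]
  have hpos : (0:ℝ) < 1 + P * Real.cos t ^ 2 := by positivity
  rw [Real.norm_eq_abs, abs_div, abs_of_pos hpos, div_le_div_iff₀ hpos (by linarith)]
  have key : |P * (2 * Real.cos t ^ 1 * (-Real.sin t))| * Real.sqrt (P + 1)
      ≤ P * (1 + P * Real.cos t ^ 2) := by
    have habs : |P * (2 * Real.cos t ^ 1 * (-Real.sin t))|
        = P * (2 * |Real.cos t| * |Real.sin t|) := by
      rw [abs_mul, abs_of_nonneg hP, abs_mul, abs_mul, abs_neg, abs_two, pow_one]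
    rw [habs]
    have hsq : (|Real.sin t| - Real.sqrt (P + 1) * |Real.cos t|) ^ 2 ≥ 0 := sq_nonneg _
    have hpyth : |Real.sin t| ^ 2 + |Real.cos t| ^ 2 = 1 := by
      rw [sq_abs, sq_abs]; exact Real.sin_sq_add_cos_sq t
    have hc : |Real.cos t| ^ 2 = Real.cos t ^ 2 := sq_abs _
    have key2 : 2 * Real.sqrt (P + 1) * |Real.sin t| * |Real.cos t| ≤ 1 + P * Real.cos t ^ 2 := by
      nlinarith [hsq, hr, hpyth, hc]
    nlinarith [mul_le_mul_of_nonneg_left key2 hP, Real.sqrt_nonneg (P + 1)]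
  calc |P * (2 * Real.cos t ^ 1 * (-Real.sin t))| * Real.sqrt (P + 1)
      ≤ P * (1 + P * Real.cos t ^ 2) := key

/-- For `P ≥ 0` and angles `θ, ξ ∈ [0, π/2]` with `θ + ξ ≤ π/2`,
`ln(1 + P·cos²(θ+ξ)) ≥ ln(1 + P·cos²ξ) − sin θ · K(P)`. -/
theorem stmt_0 (P θ ξ : ℝ) (hP : 0 ≤ P)
    (hθ : θ ∈ Set.Icc 0 (Real.pi / 2)) (hξ : ξ ∈ Set.Icc 0 (Real.pi / 2))
    (hsum : θ + ξ ≤ Real.pi / 2) :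
    Real.log (1 + P * Real.cos (θ + ξ) ^ 2) ≥
      Real.log (1 + P * Real.cos ξ ^ 2) - Real.sin θ * Kfun P := by
  obtain ⟨hθ0, hθ1⟩ := hθ
  set f : ℝ → ℝ := fun t => Real.log (1 + P * Real.cos t ^ 2) with hf
  have hmvt : ‖f (θ + ξ) - f ξ‖ ≤ (P / Real.sqrt (P + 1)) * ‖(θ + ξ) - ξ‖ := by
    apply Convex.norm_image_sub_le_of_norm_hasDerivWithin_le
      (fun t _ => ((deriv_aux P t hP).hasDerivWithinAt))
      (fun t _ => bound_aux P hP t) convex_univ (Set.mem_univ ξ) (Set.mem_univ (θ + ξ))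
  have hθnorm : ‖(θ + ξ) - ξ‖ = θ := by
    rw [Real.norm_eq_abs]; rw [abs_of_nonneg (by linarith)]; ring
  rw [hθnorm] at hmvt
  have h1 : f ξ - f (θ + ξ) ≤ P / Real.sqrt (P + 1) * θ := by
    have := abs_le.mp (by rwa [Real.norm_eq_abs] at hmvt)
    linarith [this.1]
  have h2 : P / Real.sqrt (P + 1) * θ ≤ Real.sin θ * Kfun P := by
    have hjordan : 2 / Real.pi * θ ≤ Real.sin θ := Real.mul_le_sin hθ0 hθ1
    have hπ : 0 < Real.pi := Real.pi_pos
    have hrpos : 0 < Real.sqrt (P + 1) := Real.sqrt_pos.mpr (by linarith)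
    have hj : 2 * θ ≤ Real.pi * Real.sin θ := by
      have h := mul_le_mul_of_nonneg_left hjordan (le_of_lt hπ)
      field_simp at h
      linarith
    have hK : Real.sin θ * Kfun P = (Real.sin θ * Real.pi * P / 2) / Real.sqrt (P + 1) := by
      rw [Kfun]; field_simp
    rw [hK, div_mul_eq_mul_div, div_le_div_iff₀ hrpos hrpos]
    have : P * (Real.pi * Real.sin θ - 2 * θ) ≥ 0 :=
      mul_nonneg hP (by linarith)
    nlinarith [sq_nonneg (Real.sqrt (P + 1)), mul_nonneg (mul_nonneg hP (by linarith : (0:ℝ) ≤ Real.pi * Real.sin θ - 2 * θ)) hrpos.le]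
  have : f ξ - f (θ + ξ) ≤ Real.sin θ * Kfun P := le_trans h1 h2
  simp only [hf] at this
  linarith
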